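/- arXiv:2407.00385 — 2 statements merged into one kernel-verified Lean document; each statement's English description precedes it below -/
import Mathlib

section
/- Let W̃ and Ŵ be symmetric PSD n×n matrices with rank(W̃) = R < n and rank(Ŵ) = R+1, with λ̃₁ the largest eigenvalue of W̃ and λ̂_{R+1} the smallest nonzero eigenvalue of Ŵ. If either R·λ̃₁ ≤ (R+1)·λ̂_{R+1}, or 0 < ε < λ̃₁·λ̂_{R+1}/(R·λ̃₁ − (R+1)·λ̂_{R+1}), then trace((W̃ + εI)⁻¹) > trace((Ŵ + εI)⁻¹). -/
open Matrix Finset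

lemma trace_inv_eq {n : ℕ} (A : Matrix (Fin n) (Fin n) ℝ) (hA : A.IsHermitian) (ε : ℝ)
    (h : ∀ i, hA.eigenvalues i + ε ≠ 0) :
    (A + ε • (1 : Matrix (Fin n) (Fin n) ℝ))⁻¹.trace = ∑ i, (hA.eigenvalues i + ε)⁻¹ := by
  set U : Matrix (Fin n) (Fin n) ℝ := (hA.eigenvectorUnitary : Matrix (Fin n) (Fin n) ℝ)
  have hUU : star U * U = 1 := (Matrix.mem_unitaryGroup_iff').mp hA.eigenvectorUnitary.2
  have hUU' : U * star U = 1 := (Matrix.mem_unitaryGroup_iff).mp hA.eigenvectorUnitary.2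
  have hdiag : (RCLike.ofReal ∘ hA.eigenvalues : Fin n → ℝ) = hA.eigenvalues := by
    ext i; simp
  have key : A + ε • (1 : Matrix (Fin n) (Fin n) ℝ)
      = U * diagonal (fun i => hA.eigenvalues i + ε) * star U := by
    conv_lhs => rw [hA.spectral_theorem, Unitary.conjStarAlgAut_apply]
    rw [hdiag]
    have h1 : ε • (1 : Matrix (Fin n) (Fin n) ℝ) = U * diagonal (fun _ => ε) * star U := by
      rw [Matrix.smul_one_eq_diagonal]
      calc diagonal (fun _ : Fin n => ε) = U * star U * diagonal (fun _ : Fin n => ε) := by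
            rw [hUU', one_mul]
        _ = U * diagonal (fun _ : Fin n => ε) * star U := by
            rw [mul_assoc, mul_assoc]
            congr 1
            ext i j
            simp [Matrix.mul_apply, Matrix.diagonal, mul_comm]
    rw [h1, ← Matrix.add_mul, ← Matrix.mul_add, Matrix.diagonal_add]
  have hinv : (A + ε • (1 : Matrix (Fin n) (Fin n) ℝ))⁻¹
      = U * diagonal (fun i => (hA.eigenvalues i + ε)⁻¹) * star U := by
    apply Matrix.inv_eq_right_inv
    rw [key]
    calc U * diagonal (fun i => hA.eigenvalues i + ε) * star U *
          (U * diagonal (fun i => (hA.eigenvalues i + ε)⁻¹) * star U)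
        = U * (diagonal (fun i => hA.eigenvalues i + ε) * ((star U * U) *
            diagonal (fun i => (hA.eigenvalues i + ε)⁻¹))) * star U := by
          simp only [Matrix.mul_assoc]
      _ = 1 := by
          rw [hUU, one_mul, diagonal_mul_diagonal]
          simp only [fun i => mul_inv_cancel₀ (h i)]
          rw [diagonal_one, mul_one, hUU']
  rw [hinv, Matrix.trace_mul_comm, ← Matrix.mul_assoc, hUU, one_mul, trace_diagonal]

/-- Proposition 1: if `rank W̃ = R < n`, `rank Ŵ = R+1`, `λ̃₁` is the top
eigenvalue of `W̃` and `λ̂` the smallest positive eigenvalue of `Ŵ`, then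
for `ε` small enough (or unconditionally if `R·λ̃₁ ≤ (R+1)·λ̂`),
`trace (W̃+εI)⁻¹ > trace (Ŵ+εI)⁻¹`. -/
theorem stmt4 {n : ℕ} (Wt Wh : Matrix (Fin n) (Fin n) ℝ)
    (hWt : Wt.PosSemidef) (hWh : Wh.PosSemidef)
    (R : ℕ) (hRt : Wt.rank = R) (hRn : R < n) (hRh : Wh.rank = R + 1)
    (lamt : ℝ) (hlamt : IsGreatest (Set.range hWt.1.eigenvalues) lamt)
    (hlamtpos : 0 < lamt)
    (lamh : ℝ) (hlamhpos : 0 < lamh)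
    (hlamh : IsLeast {x | x ∈ Set.range hWh.1.eigenvalues ∧ 0 < x} lamh)
    (ε : ℝ) (hε : 0 < ε)
    (hsmall : (R : ℝ) * lamt ≤ ((R : ℝ) + 1) * lamh ∨
      ε < lamt * lamh / ((R : ℝ) * lamt - ((R : ℝ) + 1) * lamh)) :
    (Wt + ε • (1 : Matrix (Fin n) (Fin n) ℝ))⁻¹.trace
      > (Wh + ε • (1 : Matrix (Fin n) (Fin n) ℝ))⁻¹.trace := by
  set f := hWt.1.eigenvalues with hf
  set g := hWh.1.eigenvalues with hg
  have hfnn : ∀ i, 0 ≤ f i := hWt.eigenvalues_nonneg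
  have hgnn : ∀ i, 0 ≤ g i := hWh.eigenvalues_nonneg
  have hfne : ∀ i, f i + ε ≠ 0 := fun i => ne_of_gt (by have := hfnn i; linarith)
  have hgne : ∀ i, g i + ε ≠ 0 := fun i => ne_of_gt (by have := hgnn i; linarith)
  rw [trace_inv_eq Wt hWt.1 ε hfne, trace_inv_eq Wh hWh.1 ε hgne]
  -- key scalar inequality
  have hkey : 0 < lamt * lamh + ((R : ℝ) + 1) * ε * lamh - (R : ℝ) * ε * lamt := by
    rcases hsmall with h | h
    · nlinarith [mul_pos hlamtpos hlamhpos, mul_pos hε hlamhpos]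
    · set d : ℝ := (R : ℝ) * lamt - ((R : ℝ) + 1) * lamh with hd
      rcases lt_trichotomy d 0 with hd0 | hd0 | hd0
      · nlinarith [mul_pos hε hlamhpos]
      · rw [hd0, div_zero] at h; linarith
      · have := (lt_div_iff₀ hd0).mp h
        nlinarith
    -- counts
  have hlamtε : (0:ℝ) < lamt + ε := by linarith
  have hlamhε : (0:ℝ) < lamh + ε := by linarith
  have hcardt : (univ.filter (fun i : Fin n => f i ≠ 0)).card = R := by
    have := hWt.1.rank_eq_card_non_zero_eigs
    rw [hRt] at this
    rw [← Fintype.card_subtype, ← this]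
  have hcardh : (univ.filter (fun i : Fin n => g i ≠ 0)).card = R + 1 := by
    have := hWh.1.rank_eq_card_non_zero_eigs
    rw [hRh] at this
    rw [← Fintype.card_subtype, ← this]
  -- lower bound for Wt sum
  have hsplitt : ∑ i, (f i + ε)⁻¹ =
      ∑ i ∈ univ.filter (fun i => f i ≠ 0), (f i + ε)⁻¹ +
      ∑ i ∈ univ.filter (fun i => ¬ f i ≠ 0), (f i + ε)⁻¹ :=
    (Finset.sum_filter_add_sum_filter_not _ _ _).symm
  have hzt : ∑ i ∈ univ.filter (fun i => ¬ f i ≠ 0), (f i + ε)⁻¹ = ((n : ℝ) - R) * ε⁻¹ := by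
    rw [Finset.sum_congr rfl (fun i hi => by
      rw [not_not.mp (Finset.mem_filter.mp hi).2, zero_add])]
    rw [Finset.sum_const, Finset.filter_not, Finset.card_sdiff_of_subset (Finset.filter_subset _ _),
      hcardt, Finset.card_univ, Fintype.card_fin, nsmul_eq_mul, Nat.cast_sub hRn.le]
  have hboundt : ∑ i ∈ univ.filter (fun i => f i ≠ 0), (f i + ε)⁻¹ ≥ (R : ℝ) * (lamt + ε)⁻¹ := by
    have := Finset.card_nsmul_le_sum (univ.filter (fun i => f i ≠ 0))
      (fun i => (f i + ε)⁻¹) ((lamt + ε)⁻¹) (fun i _ => by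
        have h1 : f i ≤ lamt := hlamt.2 ⟨i, rfl⟩
        have h2 : 0 < f i + ε := by have := hfnn i; linarith
        exact inv_anti₀ h2 (by linarith))
    rwa [hcardt, nsmul_eq_mul] at this
  -- upper bound for Wh sum
  have hsplith : ∑ i, (g i + ε)⁻¹ =
      ∑ i ∈ univ.filter (fun i => g i ≠ 0), (g i + ε)⁻¹ +
      ∑ i ∈ univ.filter (fun i => ¬ g i ≠ 0), (g i + ε)⁻¹ :=
    (Finset.sum_filter_add_sum_filter_not _ _ _).symm
  have hRn' : R + 1 ≤ n := hRn
  have hzh : ∑ i ∈ univ.filter (fun i => ¬ g i ≠ 0), (g i + ε)⁻¹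
      = ((n : ℝ) - R - 1) * ε⁻¹ := by
    rw [Finset.sum_congr rfl (fun i hi => by
      rw [not_not.mp (Finset.mem_filter.mp hi).2, zero_add])]
    rw [Finset.sum_const, Finset.filter_not, Finset.card_sdiff_of_subset (Finset.filter_subset _ _),
      hcardh, Finset.card_univ, Fintype.card_fin, nsmul_eq_mul, Nat.cast_sub hRn']
    push_cast
    ring_nf
  have hboundh : ∑ i ∈ univ.filter (fun i => g i ≠ 0), (g i + ε)⁻¹
      ≤ ((R : ℝ) + 1) * (lamh + ε)⁻¹ := by
    have := Finset.sum_le_card_nsmul (univ.filter (fun i => g i ≠ 0))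
      (fun i => (g i + ε)⁻¹) ((lamh + ε)⁻¹) (fun i hi => by
        have hne : g i ≠ 0 := (Finset.mem_filter.mp hi).2
        have hgpos : 0 < g i := lt_of_le_of_ne (hgnn i) (Ne.symm hne)
        have h1 : lamh ≤ g i := hlamh.2 ⟨⟨i, rfl⟩, hgpos⟩
        exact inv_anti₀ hlamhε (by linarith))
    rw [hcardh, nsmul_eq_mul] at this
    push_cast at this
    exact this
  have step : ε⁻¹ + (R : ℝ) * (lamt + ε)⁻¹ - ((R : ℝ) + 1) * (lamh + ε)⁻¹
      = (lamt * lamh + ((R : ℝ) + 1) * ε * lamh - (R : ℝ) * ε * lamt)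
        / (ε * (lamt + ε) * (lamh + ε)) := by
    field_simp
    ring
  have hden : (0:ℝ) < ε * (lamt + ε) * (lamh + ε) := by positivity
  have hstrict : (0:ℝ) < ε⁻¹ + (R : ℝ) * (lamt + ε)⁻¹ - ((R : ℝ) + 1) * (lamh + ε)⁻¹ := by
    rw [step]; exact div_pos hkey hden
  rw [hsplitt, hsplith, hzt, hzh]
  have hN : (1:ℝ) ≤ (n : ℝ) - R := by
    have : (R:ℝ) + 1 ≤ n := by exact_mod_cast hRn
    linarith
  nlinarith [hboundt, hboundh, hstrict, inv_pos.mpr hε]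
end

section
/- Fix ε > 0 and PSD n×n matrices M_i for i in a finite set V, and let W = Σ_{i∈V} M_i. The set function E(T) = trace((εI + Σ_{i∈T} M_i)⁻¹) is α-supermodular with α ≥ ε/λ_max(εI + W): for all A ⊆ B ⊆ V and e ∈ V \ B, E(A) − E(A ∪ {e}) ≥ (ε/λ_max(εI + W)) · (E(B) − E(B ∪ {e})). -/
set_option linter.unusedSectionVars false
set_option linter.unusedVariables false
set_option maxHeartbeats 1000000

open Matrix Finset
open scoped MatrixOrder

section Aux
variable {m : Type*} [Fintype m] [DecidableEq m]



private lemma psd_smul {A : Matrix m m ℝ} (hA : A.PosSemidef) {c : ℝ} (hc : 0 ≤ c) :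
    (c • A).PosSemidef := by
  refine Matrix.PosSemidef.of_dotProduct_mulVec_nonneg ?_ fun x => ?_
  · show (c • A)ᴴ = c • A
    rw [conjTranspose_smul, hA.1]
    simp
  · have := hA.dotProduct_mulVec_nonneg x
    simp only [smul_mulVec, dotProduct_smul, smul_eq_mul]
    exact mul_nonneg hc this

private lemma psd_diag {A : Matrix m m ℝ} (hA : A.PosSemidef) (i : m) : 0 ≤ A i i := by
  have := hA.dotProduct_mulVec_nonneg (Pi.single i 1)
  simpa [mulVec_single, single_dotProduct] using this

private lemma psd_trace_nonneg {A : Matrix m m ℝ} (hA : A.PosSemidef) : 0 ≤ A.trace := by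
  exact Finset.sum_nonneg fun i _ => psd_diag hA i

private lemma trace_mul_psd_nonneg {A B : Matrix m m ℝ} (hA : A.PosSemidef)
    (hB : B.PosSemidef) : 0 ≤ (A * B).trace := by
  set s := CFC.sqrt B with hs
  have hss : s * s = B := CFC.sqrt_mul_sqrt_self B hB.nonneg
  have hherm : sᴴ = s := (CFC.sqrt_nonneg B).posSemidef.1
  have h1 : A * B = A * s * s := by rw [mul_assoc, hss]
  have h2 : (A * s * s).trace = (s * A * s).trace := by
    rw [trace_mul_cycle]
  have h3 : (s * A * s).PosSemidef := by
    have := hA.conjTranspose_mul_mul_same s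
    rwa [hherm] at this
  rw [h1, h2]
  exact psd_trace_nonneg h3


private lemma mulvec_ne {S : Matrix m m ℝ} (hdet : IsUnit S.det) {x : m → ℝ} (hx : x ≠ 0) :
    S *ᵥ x ≠ 0 := by
  intro h
  apply hx
  have : S⁻¹ *ᵥ (S *ᵥ x) = x := by
    rw [mulVec_mulVec, nonsing_inv_mul S hdet, one_mulVec]
  rw [h, mulVec_zero] at this
  exact this.symm

private lemma posDef_conj {A S : Matrix m m ℝ} (hA : A.PosDef) (hS : S.IsHermitian)
    (hdet : IsUnit S.det) : (S * A * S).PosDef := by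
  have hsym : Sᵀ = S := by
    have := hS.eq
    simpa [conjTranspose_eq_transpose_of_trivial] using this
  refine posDef_iff_dotProduct_mulVec.mpr ⟨?_, fun x hx => ?_⟩
  · show (S * A * S)ᴴ = S * A * S
    rw [conjTranspose_mul, conjTranspose_mul, hA.1, hS.eq]
    rw [mul_assoc]
  · have hx' : S *ᵥ x ≠ 0 := mulvec_ne hdet hx
    have h0 := (posDef_iff_dotProduct_mulVec.mp hA).2 hx'
    have key : star x ⬝ᵥ (S * A * S) *ᵥ x = star (S *ᵥ x) ⬝ᵥ A *ᵥ (S *ᵥ x) := by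
      rw [show (S * A * S) *ᵥ x = S *ᵥ (A *ᵥ (S *ᵥ x)) by
        simp [mulVec_mulVec, mul_assoc]]
      simp only [star_trivial]
      rw [dotProduct_mulVec x S, ← mulVec_transpose, hsym]
    rw [key]
    exact h0

private lemma one_sub_inv_psd {C : Matrix m m ℝ} (hC : C.PosDef)
    (h1 : (C - 1).PosSemidef) : ((1 : Matrix m m ℝ) - C⁻¹).PosSemidef := by
  have hCdet : IsUnit C.det := isUnit_iff_isUnit_det C |>.mp hC.isUnit
  have hCi : C⁻¹.PosDef := hC.inv
  set R := CFC.sqrt C⁻¹ with hR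
  have hRR : R * R = C⁻¹ := CFC.sqrt_mul_sqrt_self C⁻¹ hCi.posSemidef.nonneg
  have hRherm : Rᴴ = R := (CFC.sqrt_nonneg C⁻¹).posSemidef.1
  have hRdet : IsUnit R.det := by
    have : IsUnit (R.det * R.det) := by
      rw [← det_mul, hRR]
      exact isUnit_iff_isUnit_det _ |>.mp hCi.isUnit
    exact isUnit_of_mul_isUnit_left this
  have hCinv : C = R⁻¹ * R⁻¹ := by
    rw [← Matrix.mul_inv_rev, hRR, nonsing_inv_nonsing_inv C hCdet]
  have hRCR : R * C * R = 1 := by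
    rw [hCinv, show R * (R⁻¹ * R⁻¹) * R = (R * R⁻¹) * (R⁻¹ * R) by noncomm_ring,
      mul_nonsing_inv R hRdet, nonsing_inv_mul R hRdet, one_mul]
  have key : (1 : Matrix m m ℝ) - C⁻¹ = R * (C - 1) * R := by
    rw [Matrix.mul_sub, Matrix.sub_mul, hRCR, mul_one, hRR]
  rw [key]
  have := h1.conjTranspose_mul_mul_same R
  rwa [hRherm] at this

private lemma inv_antitone {A B : Matrix m m ℝ} (hA : A.PosDef) (hB : B.PosDef)
    (hBA : (B - A).PosSemidef) : (A⁻¹ - B⁻¹).PosSemidef := by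
  have hAdet : IsUnit A.det := isUnit_iff_isUnit_det A |>.mp hA.isUnit
  have hAi : A⁻¹.PosDef := hA.inv
  set S := CFC.sqrt A⁻¹ with hS
  have hSS : S * S = A⁻¹ := CFC.sqrt_mul_sqrt_self A⁻¹ hAi.posSemidef.nonneg
  have hSherm : Sᴴ = S := (CFC.sqrt_nonneg A⁻¹).posSemidef.1
  have hSdet : IsUnit S.det := by
    have : IsUnit (S.det * S.det) := by
      rw [← det_mul, hSS]
      exact isUnit_iff_isUnit_det _ |>.mp hAi.isUnit
    exact isUnit_of_mul_isUnit_left this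
  have hAinv : A = S⁻¹ * S⁻¹ := by
    rw [← Matrix.mul_inv_rev, hSS, nonsing_inv_nonsing_inv A hAdet]
  have hSAS : S * A * S = 1 := by
    rw [hAinv, show S * (S⁻¹ * S⁻¹) * S = (S * S⁻¹) * (S⁻¹ * S) by noncomm_ring,
      mul_nonsing_inv S hSdet, nonsing_inv_mul S hSdet, one_mul]
  set C := S * B * S with hCdefn
  have hC : C.PosDef := posDef_conj hB hSherm hSdet
  have h1 : (C - 1).PosSemidef := by
    have hdiff : C - 1 = Sᴴ * (B - A) * S := by
      rw [hSherm, ← hSAS, hCdefn, Matrix.mul_sub, Matrix.sub_mul]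
    rw [hdiff]
    exact hBA.conjTranspose_mul_mul_same S
  have h2 : ((1 : Matrix m m ℝ) - C⁻¹).PosSemidef := one_sub_inv_psd hC h1
  have hCi : C⁻¹ = S⁻¹ * B⁻¹ * S⁻¹ := by
    rw [hCdefn, Matrix.mul_inv_rev, Matrix.mul_inv_rev, mul_assoc]
  have key : A⁻¹ - B⁻¹ = S * ((1 : Matrix m m ℝ) - C⁻¹) * S := by
    rw [Matrix.mul_sub, Matrix.sub_mul, mul_one, hSS, hCi]
    congr 1
    rw [show S * (S⁻¹ * B⁻¹ * S⁻¹) * S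
        = (S * S⁻¹) * B⁻¹ * (S⁻¹ * S) by noncomm_ring]
    rw [mul_nonsing_inv S hSdet, nonsing_inv_mul S hSdet, one_mul, mul_one]
  rw [key]
  have := h2.conjTranspose_mul_mul_same S
  rwa [hSherm] at this


private lemma smul_one_sub_psd {H : Matrix m m ℝ} (hH : H.IsHermitian) {L : ℝ}
    (hub : ∀ i, hH.eigenvalues i ≤ L) : (L • (1 : Matrix m m ℝ) - H).PosSemidef := by
  set U := (hH.eigenvectorUnitary : Matrix m m ℝ) with hU
  have hUU : U * star U = 1 := (Matrix.mem_unitaryGroup_iff).mp hH.eigenvectorUnitary.2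
  have hdiag : (diagonal (fun i => L - hH.eigenvalues i)).PosSemidef :=
    Matrix.PosSemidef.diagonal fun i => sub_nonneg.2 (hub i)
  have key : L • (1 : Matrix m m ℝ) - H
      = U * diagonal (fun i => L - hH.eigenvalues i) * star U := by
    conv_lhs => rw [hH.spectral_theorem]
    rw [Unitary.conjStarAlgAut_apply]
    rw [show (diagonal (fun i => L - hH.eigenvalues i))
        = L • 1 - diagonal (RCLike.ofReal ∘ hH.eigenvalues) by
      rw [smul_one_eq_diagonal, diagonal_sub]
      congr 1]
    rw [Matrix.mul_sub, Matrix.sub_mul, Matrix.mul_smul, mul_one, Matrix.smul_mul, hUU]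
  rw [key, Matrix.star_eq_conjTranspose]
  exact hdiag.mul_mul_conjTranspose_same U

section deriv
attribute [local instance] Matrix.frobeniusNormedAddCommGroup Matrix.frobeniusNormedRing
  Matrix.frobeniusNormedAlgebra

private lemma hasDeriv_traceInv (C Me : Matrix m m ℝ) {t : ℝ}
    (hPD : (C + t • Me).PosDef) :
    HasDerivAt (fun s : ℝ => ((C + s • Me)⁻¹).trace)
      (-(((C + t • Me)⁻¹ * Me * (C + t • Me)⁻¹).trace)) t := by
  set Z := C + t • Me with hZ
  let tr : Matrix m m ℝ →L[ℝ] ℝ :=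
    LinearMap.toContinuousLinearMap (Matrix.traceLinearMap m ℝ ℝ)
  have hpath : HasDerivAt (fun s : ℝ => C + s • Me) Me t := by
    have h := ((hasDerivAt_id t).smul_const Me).const_add C
    simp only [id, one_smul] at h
    exact h
  set u := hPD.isUnit.unit with hu
  have hspec : (u : Matrix m m ℝ) = Z := hPD.isUnit.unit_spec
  have hinv : HasFDerivAt Ring.inverse
      (-(ContinuousLinearMap.mulLeftRight ℝ _ ((u⁻¹ : (Matrix m m ℝ)ˣ) : Matrix m m ℝ)
        ((u⁻¹ : (Matrix m m ℝ)ˣ) : Matrix m m ℝ))) (u : Matrix m m ℝ) :=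
    hasFDerivAt_ringInverse u
  rw [hspec] at hinv
  have hcomp := hinv.comp_hasDerivAt t hpath
  have htr := (tr.hasFDerivAt).comp_hasDerivAt t hcomp
  have hfun : (fun s : ℝ => tr (Ring.inverse (C + s • Me)))
      = fun s : ℝ => ((C + s • Me)⁻¹).trace := by
    funext s
    simp [tr, Matrix.nonsing_inv_eq_ringInverse]
  have hval : tr ((-(ContinuousLinearMap.mulLeftRight ℝ _
        ((u⁻¹ : (Matrix m m ℝ)ˣ) : Matrix m m ℝ)
        ((u⁻¹ : (Matrix m m ℝ)ˣ) : Matrix m m ℝ))) Me)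
      = -((Z⁻¹ * Me * Z⁻¹).trace) := by
    have hco : ((u⁻¹ : (Matrix m m ℝ)ˣ) : Matrix m m ℝ) = Z⁻¹ := by
      rw [Matrix.coe_units_inv, hspec]
    simp [hco, ContinuousLinearMap.mulLeftRight_apply, tr]
  have htr' : HasDerivAt (fun s : ℝ => tr (Ring.inverse (C + s • Me)))
      (tr ((-(ContinuousLinearMap.mulLeftRight ℝ _
        ((u⁻¹ : (Matrix m m ℝ)ˣ) : Matrix m m ℝ)
        ((u⁻¹ : (Matrix m m ℝ)ˣ) : Matrix m m ℝ))) Me)) t := htr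
  rw [hfun, hval] at htr'
  exact htr'

end deriv
private lemma key_pointwise {Zx Zy Me : Matrix m m ℝ} {ε L : ℝ}
    (hε : 0 < ε) (hL : 0 < L)
    (hZx : Zx.PosDef) (hZy : Zy.PosDef) (hMe : Me.PosSemidef)
    (hxy : (Zy - Zx).PosSemidef)
    (hZxL : (L • (1 : Matrix m m ℝ) - Zx).PosSemidef)
    (hεZy : (Zy - ε • (1 : Matrix m m ℝ)).PosSemidef) :
    (ε / L) * (Zy⁻¹ * Me * Zy⁻¹).trace ≤ (Zx⁻¹ * Me * Zx⁻¹).trace := by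
  set P := Zx⁻¹ with hP
  set Q := Zy⁻¹ with hQ
  have hPpsd : P.PosSemidef := hZx.inv.posSemidef
  have hQpsd : Q.PosSemidef := hZy.inv.posSemidef
  have hPherm : Pᴴ = P := hPpsd.1
  have hQherm : Qᴴ = Q := hQpsd.1
  have hxdet : IsUnit Zx.det := isUnit_iff_isUnit_det Zx |>.mp hZx.isUnit
  have hydet : IsUnit Zy.det := isUnit_iff_isUnit_det Zy |>.mp hZy.isUnit
  have hPZP : P * Zx * P = P := by
    rw [hP, nonsing_inv_mul Zx hxdet, one_mul]
  have hQZQ : Q * Zy * Q = Q := by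
    rw [hQ, nonsing_inv_mul Zy hydet, one_mul]
  -- step a : trace(P*Me) ≤ L * trace(P*P*Me)
  have hstepa : (P * Me).trace ≤ L * (P * P * Me).trace := by
    have hmat : (L • (P * P) - P).PosSemidef := by
      have h1 : P * (L • (1 : Matrix m m ℝ) - Zx) * P = L • (P * P) - P := by
        rw [Matrix.mul_sub, Matrix.sub_mul, hPZP, Matrix.mul_smul, mul_one, Matrix.smul_mul]
      rw [← h1]
      have := hZxL.conjTranspose_mul_mul_same P
      rwa [hPherm] at this
    have := trace_mul_psd_nonneg hmat hMe
    rw [Matrix.sub_mul, trace_sub, Matrix.smul_mul, trace_smul] at this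
    simp only [smul_eq_mul] at this
    linarith
  -- step b : trace(Q*Me) ≤ trace(P*Me)
  have hstepb : (Q * Me).trace ≤ (P * Me).trace := by
    have hPQ : (P - Q).PosSemidef := inv_antitone hZx hZy hxy
    have := trace_mul_psd_nonneg hPQ hMe
    rw [Matrix.sub_mul, trace_sub] at this
    linarith
  -- step c : ε * trace(Q*Q*Me) ≤ trace(Q*Me)
  have hstepc : ε * (Q * Q * Me).trace ≤ (Q * Me).trace := by
    have hmat : (Q - ε • (Q * Q)).PosSemidef := by
      have h1 : Q * (Zy - ε • (1 : Matrix m m ℝ)) * Q = Q - ε • (Q * Q) := by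
        rw [Matrix.mul_sub, Matrix.sub_mul, hQZQ, Matrix.mul_smul, mul_one, Matrix.smul_mul]
      rw [← h1]
      have := hεZy.conjTranspose_mul_mul_same Q
      rwa [hQherm] at this
    have := trace_mul_psd_nonneg hmat hMe
    rw [Matrix.sub_mul, trace_sub, Matrix.smul_mul, trace_smul] at this
    simp only [smul_eq_mul] at this
    linarith
  have hPcyc : (Zx⁻¹ * Me * Zx⁻¹).trace = (P * P * Me).trace := by
    rw [← hP, trace_mul_cycle]
  have hQcyc : (Zy⁻¹ * Me * Zy⁻¹).trace = (Q * Q * Me).trace := by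
    rw [← hQ, trace_mul_cycle]
  rw [hPcyc, hQcyc, div_mul_eq_mul_div, div_le_iff₀ hL]
  nlinarith

end Aux

/-- Proposition 2 (supermodularity): `E(T) = trace((εI + Σ_{i∈T} M_i)⁻¹)` is
`α`-supermodular with `α ≥ ε / λ_max(εI + W)`, `W = Σ_{i∈V} M_i`. -/
theorem stmt6 {n : ℕ} {ι : Type*} [Fintype ι] [DecidableEq ι]
    (M : ι → Matrix (Fin n) (Fin n) ℝ) (hM : ∀ i, (M i).PosSemidef)
    (ε : ℝ) (hε : 0 < ε)
    (hH : (ε • (1 : Matrix (Fin n) (Fin n) ℝ) + ∑ i, M i).IsHermitian)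
    (lmax : ℝ) (hlmax : IsGreatest (Set.range hH.eigenvalues) lmax)
    (A B : Finset ι) (hAB : A ⊆ B) (e : ι) (he : e ∉ B) :
    (ε • (1 : Matrix (Fin n) (Fin n) ℝ) + ∑ i ∈ A, M i)⁻¹.trace
        - (ε • (1 : Matrix (Fin n) (Fin n) ℝ) + ∑ i ∈ insert e A, M i)⁻¹.trace
      ≥ (ε / lmax) *
        ((ε • (1 : Matrix (Fin n) (Fin n) ℝ) + ∑ i ∈ B, M i)⁻¹.trace
          - (ε • (1 : Matrix (Fin n) (Fin n) ℝ) + ∑ i ∈ insert e B, M i)⁻¹.trace) := by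
  have heA : e ∉ A := fun h => he (hAB h)
  set Me := M e with hMe
  have hsum : ∀ s : Finset ι, (∑ i ∈ s, M i).PosSemidef := fun s =>
    Finset.sum_induction M _ (fun a b ha hb => ha.add hb) Matrix.PosSemidef.zero
      (fun i _ => hM i)
  have hεI : (ε • (1 : Matrix (Fin n) (Fin n) ℝ)).PosDef := by
    rw [smul_one_eq_diagonal]
    exact (posDef_diagonal_iff).mpr fun i => hε
  set X := ε • (1 : Matrix (Fin n) (Fin n) ℝ) + ∑ i ∈ A, M i with hX
  set Y := ε • (1 : Matrix (Fin n) (Fin n) ℝ) + ∑ i ∈ B, M i with hY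
  set W := ∑ i : ι, M i with hW
  have hHPD : (ε • (1 : Matrix (Fin n) (Fin n) ℝ) + W).PosDef := hεI.add_posSemidef (hsum _)
  have hL : 0 < lmax := by
    obtain ⟨i, hi⟩ := hlmax.1
    have := hHPD.eigenvalues_pos i
    exact hi ▸ this
  have hub : ∀ i, hH.eigenvalues i ≤ lmax := fun i => hlmax.2 ⟨i, rfl⟩
  have htop : (lmax • (1 : Matrix (Fin n) (Fin n) ℝ)
      - (ε • (1 : Matrix (Fin n) (Fin n) ℝ) + W)).PosSemidef := smul_one_sub_psd hH hub
  -- pointwise facts on [0,1]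
  have hXPD : ∀ t ∈ Set.Icc (0:ℝ) 1, (X + t • Me).PosDef := fun t ht =>
    (hεI.add_posSemidef (hsum A)).add_posSemidef (psd_smul (hM e) ht.1)
  have hYPD : ∀ t ∈ Set.Icc (0:ℝ) 1, (Y + t • Me).PosDef := fun t ht =>
    (hεI.add_posSemidef (hsum B)).add_posSemidef (psd_smul (hM e) ht.1)
  have hsplitW : W = ∑ i ∈ A, M i + (Me + ∑ i ∈ (univ \ A).erase e, M i) := by
    have h1 : Me + ∑ i ∈ (univ \ A).erase e, M i = ∑ i ∈ univ \ A, M i :=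
      Finset.add_sum_erase _ M (Finset.mem_sdiff.mpr ⟨Finset.mem_univ e, heA⟩)
    have h2 : ∑ i ∈ univ \ A, M i + ∑ i ∈ A, M i = W :=
      Finset.sum_sdiff (Finset.subset_univ A)
    rw [h1, ← h2]
    abel
  have hsplitB : ∑ i ∈ B, M i = ∑ i ∈ A, M i + ∑ i ∈ B \ A, M i := by
    have := Finset.sum_sdiff (f := M) hAB
    rw [← this]
    abel
  have hxy : ∀ t : ℝ, ((Y + t • Me) - (X + t • Me)).PosSemidef := fun t => by
    have : (Y + t • Me) - (X + t • Me) = ∑ i ∈ B \ A, M i := by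
      rw [hY, hX, hsplitB]
      abel
    rw [this]
    exact hsum _
  have hZxL : ∀ t ∈ Set.Icc (0:ℝ) 1,
      (lmax • (1 : Matrix (Fin n) (Fin n) ℝ) - (X + t • Me)).PosSemidef := fun t ht => by
    have heq : lmax • (1 : Matrix (Fin n) (Fin n) ℝ) - (X + t • Me)
        = (lmax • (1 : Matrix (Fin n) (Fin n) ℝ) - (ε • (1 : Matrix (Fin n) (Fin n) ℝ) + W))
          + ((1 - t) • Me + ∑ i ∈ (univ \ A).erase e, M i) := by
      rw [hX, hsplitW, sub_smul, one_smul]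
      abel
    rw [heq]
    exact htop.add ((psd_smul (hM e) (by linarith [ht.2])).add (hsum _))
  have hεZy : ∀ t ∈ Set.Icc (0:ℝ) 1,
      ((Y + t • Me) - ε • (1 : Matrix (Fin n) (Fin n) ℝ)).PosSemidef := fun t ht => by
    have heq : (Y + t • Me) - ε • (1 : Matrix (Fin n) (Fin n) ℝ)
        = ∑ i ∈ B, M i + t • Me := by
      rw [hY]; abel
    rw [heq]
    exact (hsum B).add (psd_smul (hM e) ht.1)
  -- the interpolating function
  set g : ℝ → ℝ := fun t => ((X + t • Me)⁻¹).trace - (ε / lmax) * ((Y + t • Me)⁻¹).trace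
    with hg
  set gd : ℝ → ℝ := fun t => -(((X + t • Me)⁻¹ * Me * (X + t • Me)⁻¹).trace)
      - (ε / lmax) * (-(((Y + t • Me)⁻¹ * Me * (Y + t • Me)⁻¹).trace)) with hgd
  have hderiv : ∀ t ∈ Set.Icc (0:ℝ) 1, HasDerivAt g (gd t) t := fun t ht =>
    (hasDeriv_traceInv X Me (hXPD t ht)).sub
      ((hasDeriv_traceInv Y Me (hYPD t ht)).const_mul (ε / lmax))
  have hgd_nonpos : ∀ t ∈ Set.Icc (0:ℝ) 1, gd t ≤ 0 := fun t ht => by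
    have := key_pointwise hε hL (hXPD t ht) (hYPD t ht) (hM e) (hxy t)
      (hZxL t ht) (hεZy t ht)
    rw [hgd]
    dsimp only
    linarith
  have hanti : AntitoneOn g (Set.Icc (0:ℝ) 1) := by
    apply antitoneOn_of_deriv_nonpos (convex_Icc 0 1)
    · exact fun t ht => (hderiv t ht).continuousAt.continuousWithinAt
    · intro t ht
      rw [interior_Icc] at ht
      exact (hderiv t (Set.Ioo_subset_Icc_self ht)).differentiableAt.differentiableWithinAt
    · intro t ht
      rw [interior_Icc] at ht
      rw [(hderiv t (Set.Ioo_subset_Icc_self ht)).deriv]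
      exact hgd_nonpos t (Set.Ioo_subset_Icc_self ht)
  have h01 : g 1 ≤ g 0 := hanti (Set.mem_Icc.mpr ⟨le_refl 0, zero_le_one⟩)
    (Set.mem_Icc.mpr ⟨zero_le_one, le_refl 1⟩) zero_le_one
  have hinsA : ε • (1 : Matrix (Fin n) (Fin n) ℝ) + ∑ i ∈ insert e A, M i
      = X + (1:ℝ) • Me := by
    rw [Finset.sum_insert heA, one_smul, hX]
    abel
  have hinsB : ε • (1 : Matrix (Fin n) (Fin n) ℝ) + ∑ i ∈ insert e B, M i
      = Y + (1:ℝ) • Me := by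
    rw [Finset.sum_insert he, one_smul, hY]
    abel
  have hg0 : g 0 = X⁻¹.trace - (ε / lmax) * Y⁻¹.trace := by
    rw [hg]; dsimp only; simp only [zero_smul, add_zero]
  have hg1 : g 1 = ((X + (1:ℝ) • Me)⁻¹).trace
      - (ε / lmax) * ((Y + (1:ℝ) • Me)⁻¹).trace := by
    rw [hg]
  rw [ge_iff_le, hinsA, hinsB]
  rw [hg0, hg1] at h01
  linarith
end
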